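/- (Ripple bound for ε-complementary pairs.) Let M ≥ 1, ε ≥ 0, and let u, v be unimodular sequences of length M forming an ε-complementary pair, i.e. |R_u(τ) + R_v(τ)| ≤ ε for every τ ∈ {1,…,M−1}. Then for every ψ ∈ ℝ, the sum power-domain array factor deviates from flat by at most 2(M−1)ε: | |F_u(ψ)|² + |F_v(ψ)|² − 2M | ≤ 2(M−1)ε. -/

import Mathlib

/-- The array factor of a length-`M` sequence `u` at spatial frequency `ψ`:
`F_u(ψ) = Σ_{m=0}^{M-1} u(m) · exp(i·m·ψ)`. -/
noncomputable def arrayFactor (M : ℕ) (u : ℕ → ℂ) (ψ : ℝ) : ℂ :=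
  ∑ m ∈ Finset.range M, u m * Complex.exp (Complex.I * (m : ℂ) * (ψ : ℂ))

/-- The aperiodic autocorrelation of a length-`M` sequence `u` at shift `τ`:
`R_u(τ) = Σ_{m=0}^{M-1-τ} u(m) · conj(u(m+τ))`. -/
noncomputable def aacf (M : ℕ) (u : ℕ → ℂ) (τ : ℕ) : ℂ :=
  ∑ m ∈ Finset.range (M - τ), u m * (starRingEnd ℂ) (u (m + τ))

open Finset Complex

lemma triangle_sum (M : ℕ) (g : ℕ → ℕ → ℂ) :
    ∑ p ∈ (Finset.range M ×ˢ Finset.range M).filter (fun p => p.1 < p.2), g p.1 p.2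
      = ∑ τ ∈ Finset.Ico 1 M, ∑ m ∈ Finset.range (M - τ), g m (m + τ) := by
  rw [Finset.sum_sigma']
  refine Finset.sum_bij' (fun p _ => (⟨p.2 - p.1, p.1⟩ : (_ : ℕ) × ℕ))
    (fun x _ => (x.2, x.2 + x.1)) ?_ ?_ ?_ ?_ ?_
  · rintro ⟨m, n⟩ h
    simp only [Finset.mem_filter, Finset.mem_product, Finset.mem_range] at h
    simp only [Finset.mem_sigma, Finset.mem_Ico, Finset.mem_range]
    omega
  · rintro ⟨τ, m⟩ h
    simp only [Finset.mem_sigma, Finset.mem_Ico, Finset.mem_range] at h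
    simp only [Finset.mem_filter, Finset.mem_product, Finset.mem_range]
    omega
  · rintro ⟨m, n⟩ h
    simp only [Finset.mem_filter, Finset.mem_product, Finset.mem_range] at h
    dsimp only
    simp only [Prod.mk.injEq]
    exact ⟨trivial, by omega⟩
  · rintro ⟨τ, m⟩ h
    simp only [Sigma.mk.inj_iff]
    exact ⟨by omega, heq_of_eq rfl⟩
  · rintro ⟨m, n⟩ h
    simp only [Finset.mem_filter, Finset.mem_product, Finset.mem_range] at h
    dsimp only
    congr 1
    omega

lemma sq_abs_af (M : ℕ) (u : ℕ → ℂ) (ψ : ℝ) (hu : ∀ m < M, ‖u m‖ = 1) :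
    (‖arrayFactor M u ψ‖)^2
      = M + 2 * (∑ τ ∈ Finset.Ico 1 M,
          aacf M u τ * Complex.exp (-(Complex.I * τ * ψ))).re := by
  set F := arrayFactor M u ψ with hFdef
  set f : ℕ × ℕ → ℂ := fun p =>
    (u p.1 * Complex.exp (Complex.I * p.1 * ψ)) *
      (starRingEnd ℂ) (u p.2 * Complex.exp (Complex.I * p.2 * ψ)) with hf
  set P := (Finset.range M ×ˢ Finset.range M) with hP
  set S := ∑ τ ∈ Finset.Ico 1 M, aacf M u τ * Complex.exp (-(Complex.I * τ * ψ)) with hS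
  have hFF : F * (starRingEnd ℂ) F = ∑ p ∈ P, f p := by
    rw [hFdef, arrayFactor, map_sum, Finset.sum_mul_sum, ← Finset.sum_product']
  have hsplit : ∑ p ∈ P, f p
      = (∑ p ∈ P.filter (fun p => p.1 < p.2), f p)
        + ((∑ p ∈ P.filter (fun p => p.1 = p.2), f p)
        + (∑ p ∈ P.filter (fun p => p.2 < p.1), f p)) := by
    rw [← Finset.sum_filter_add_sum_filter_not P (fun p => p.1 < p.2)]
    congr 1
    rw [← Finset.sum_filter_add_sum_filter_not (P.filter (fun p => ¬ p.1 < p.2))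
      (fun p => p.1 = p.2), Finset.filter_filter, Finset.filter_filter]
    congr 2
    · apply Finset.filter_congr; intro p _; constructor
      · exact fun h => h.2
      · exact fun h => ⟨by omega, h⟩
    · apply Finset.filter_congr; intro p _; constructor
      · intro h; omega
      · intro h; exact ⟨by omega, by omega⟩
  have hB : ∑ p ∈ P.filter (fun p => p.1 = p.2), f p = (M : ℂ) := by
    have h1 : ∑ p ∈ P.filter (fun p => p.1 = p.2), f p = ∑ m ∈ Finset.range M, f (m, m) := by
      refine Finset.sum_bij' (fun p _ => p.1) (fun m _ => (m, m)) ?_ ?_ ?_ ?_ ?_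
      · intro p hp
        simp only [hP, Finset.mem_filter, Finset.mem_product, Finset.mem_range] at hp
        simpa using hp.1.1
      · intro m hm
        simp only [hP, Finset.mem_filter, Finset.mem_product, Finset.mem_range] at *
        simpa using hm
      · intro p hp
        simp only [Finset.mem_filter] at hp
        exact Prod.ext rfl hp.2
      · intro m hm; rfl
      · intro p hp
        simp only [Finset.mem_filter] at hp
        exact (congrArg f (Prod.ext rfl hp.2 : ((p.1, p.1) : ℕ × ℕ) = p)).symm
    rw [h1]
    have h2 : ∀ m ∈ Finset.range M, f (m, m) = 1 := by
      intro m hm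
      rw [hf]
      simp only
      rw [Complex.mul_conj]
      rw [Complex.normSq_mul, Complex.normSq_eq_norm_sq, Complex.normSq_eq_norm_sq,
        hu m (Finset.mem_range.mp hm)]
      rw [Complex.norm_exp]
      simp
    rw [Finset.sum_congr rfl h2]
    simp
  have hC : ∑ p ∈ P.filter (fun p => p.2 < p.1), f p
      = (starRingEnd ℂ) (∑ p ∈ P.filter (fun p => p.1 < p.2), f p) := by
    rw [map_sum]
    refine Finset.sum_bij' (fun p _ => p.swap) (fun p _ => p.swap) ?_ ?_ ?_ ?_ ?_
    · intro p hp
      simp only [Finset.mem_filter, Finset.mem_product, Finset.mem_range, Prod.fst_swap,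
        Prod.snd_swap, hP] at hp ⊢
      tauto
    · intro p hp
      simp only [Finset.mem_filter, Finset.mem_product, Finset.mem_range, Prod.fst_swap,
        Prod.snd_swap, hP] at hp ⊢
      tauto
    · intro p _; exact Prod.swap_swap p
    · intro p _; exact Prod.swap_swap p
    · intro p _
      simp only [hf, map_mul, Prod.fst_swap, Prod.snd_swap, Complex.conj_conj]
      ring
  have hA : ∑ p ∈ P.filter (fun p => p.1 < p.2), f p = S := by
    rw [hP, triangle_sum M (fun m n => f (m, n)), hS]
    refine Finset.sum_congr rfl ?_
    intro τ hτ
    rw [aacf, Finset.sum_mul]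
    refine Finset.sum_congr rfl ?_
    intro m hm
    rw [hf]
    simp only [map_mul]
    have h1 : (starRingEnd ℂ) (Complex.exp (Complex.I * ((m + τ : ℕ) : ℂ) * (ψ : ℂ)))
        = Complex.exp (-(Complex.I * ((m + τ : ℕ) : ℂ) * (ψ : ℂ))) := by
      rw [← Complex.exp_conj]
      congr 1
      simp only [map_neg, map_mul, Complex.conj_I, Complex.conj_natCast, Complex.conj_ofReal]
      ring
    rw [h1]
    rw [show u m * Complex.exp (Complex.I * (m : ℂ) * (ψ : ℂ)) *
        ((starRingEnd ℂ) (u (m + τ)) * Complex.exp (-(Complex.I * ((m + τ : ℕ) : ℂ) * (ψ : ℂ))))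
        = u m * (starRingEnd ℂ) (u (m + τ)) *
          (Complex.exp (Complex.I * (m : ℂ) * (ψ : ℂ)) *
            Complex.exp (-(Complex.I * ((m + τ : ℕ) : ℂ) * (ψ : ℂ)))) from by ring]
    rw [← Complex.exp_add]
    congr 2
    push_cast
    ring
  have key : F * (starRingEnd ℂ) F = (M : ℂ) + (S + (starRingEnd ℂ) S) := by
    rw [hFF, hsplit, hA, hB, hC, hA]; ring
  have habs : ‖F‖ ^ 2 = (F * (starRingEnd ℂ) F).re := by
    rw [Complex.mul_conj]
    simp [Complex.sq_norm]
  rw [habs, key, Complex.add_conj]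
  simp

/-- Ripple bound for `ε`-complementary pairs: the sum power-domain array factor
deviates from the flat level `2M` by at most `2(M−1)ε`. -/
theorem eps_complementary_ripple_bound (M : ℕ) (hM : 1 ≤ M) (ε : ℝ) (hε : 0 ≤ ε)
    (u v : ℕ → ℂ)
    (hu : ∀ m < M, ‖u m‖ = 1) (hv : ∀ m < M, ‖v m‖ = 1)
    (heps : ∀ τ, 1 ≤ τ → τ < M → ‖aacf M u τ + aacf M v τ‖ ≤ ε)
    (ψ : ℝ) :
    |‖arrayFactor M u ψ‖ ^ 2 + ‖arrayFactor M v ψ‖ ^ 2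
        - 2 * M| ≤ 2 * ((M : ℝ) - 1) * ε := by
  have hu2 := sq_abs_af M u ψ hu
  have hv2 := sq_abs_af M v ψ hv
  set S := ∑ τ ∈ Finset.Ico 1 M,
      (aacf M u τ + aacf M v τ) * Complex.exp (-(Complex.I * τ * ψ)) with hS
  have hsum : (∑ τ ∈ Finset.Ico 1 M, aacf M u τ * Complex.exp (-(Complex.I * τ * ψ)))
      + (∑ τ ∈ Finset.Ico 1 M, aacf M v τ * Complex.exp (-(Complex.I * τ * ψ))) = S := by
    rw [hS, ← Finset.sum_add_distrib]
    exact Finset.sum_congr rfl fun τ _ => by ring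
  rw [hu2, hv2]
  have key : ((M : ℝ) + 2 * (∑ τ ∈ Finset.Ico 1 M,
        aacf M u τ * Complex.exp (-(Complex.I * τ * ψ))).re)
      + ((M : ℝ) + 2 * (∑ τ ∈ Finset.Ico 1 M,
        aacf M v τ * Complex.exp (-(Complex.I * τ * ψ))).re) - 2 * (M : ℝ)
      = 2 * S.re := by
    rw [← hsum, Complex.add_re]; ring
  rw [key]
  have h1 : |2 * S.re| = 2 * |S.re| := by rw [abs_mul]; norm_num
  have h2 : |S.re| ≤ ‖S‖ := Complex.abs_re_le_norm S
  have h3 : ‖S‖ ≤ ∑ τ ∈ Finset.Ico 1 M,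
      ‖(aacf M u τ + aacf M v τ) * Complex.exp (-(Complex.I * τ * ψ))‖ := by
    rw [hS]; exact norm_sum_le _ _
  have h4 : ∑ τ ∈ Finset.Ico 1 M,
      ‖(aacf M u τ + aacf M v τ) * Complex.exp (-(Complex.I * τ * ψ))‖
      ≤ ∑ τ ∈ Finset.Ico 1 M, ε := by
    refine Finset.sum_le_sum ?_
    intro τ hτ
    rw [Finset.mem_Ico] at hτ
    rw [norm_mul]
    have hexp : ‖Complex.exp (-(Complex.I * τ * ψ))‖ = 1 := by
      rw [Complex.norm_exp]
      simp
    rw [hexp, mul_one]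
    exact heps τ hτ.1 hτ.2
  have h5 : ∑ τ ∈ Finset.Ico 1 M, ε = ((M : ℝ) - 1) * ε := by
    rw [Finset.sum_const, Nat.card_Ico, nsmul_eq_mul]
    congr 1
    push_cast [Nat.cast_sub hM]
    ring
  rw [h1]
  calc 2 * |S.re| ≤ 2 * ‖S‖ := by linarith
    _ ≤ 2 * ((M : ℝ) - 1) * ε := by
        rw [h5] at h4
        nlinarith [h3, h4]
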